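/- Let the fixed deduction system be a subterm deduction system and S a constraint system. Let σ be a ground substitution with σ ⊨ S, and let D be a proof of σ ⊨ S in which no term is deduced twice by a standard rule. If s is a term with s ∈ Sub(D) (s is a subterm of some term occurring in D) and s ∉ (Sub(Out(S))∖X)σ, then there exists an index i of D such that D[i] = l → s is a composition rule and s ∉ Sub(RHS(D,i−1)). -/

import Mathlib

/-! ### Terms -/

/-- First-order terms: variables, ordinary constants, nonces (an infinite
subset of the constants), and function applications. -/
inductive Term : Type
  | var : ℕ → Term
  | cst : ℕ → Term
  | nonce : ℕ → Term
  | func : ℕ → List Term → Term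

namespace Term

/-- The subterm relation. -/
inductive IsSubterm : Term → Term → Prop
  | refl (t : Term) : IsSubterm t t
  | func {s t : Term} {f : ℕ} {args : List Term} :
      t ∈ args → IsSubterm s t → IsSubterm s (func f args)

/-- The set of subterms of a term. -/
def sub (t : Term) : Set Term := {s | IsSubterm s t}

/-- The set of (indices of) variables of a term. -/
def varsSet (t : Term) : Set ℕ := {x | IsSubterm (var x) t}

/-- A term is ground if it has no variables. -/
def Ground (t : Term) : Prop := varsSet t = ∅

/-- The term is a variable. -/
def IsVar : Term → Prop
  | var _ => True
  | _ => False

/-- Application of a substitution to a term. -/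
noncomputable def subst (σ : ℕ → Term) : Term → Term
  | var x => σ x
  | cst c => cst c
  | nonce n => nonce n
  | func f args => func f (args.attach.map (fun a => Term.subst σ a.1))
decreasing_by
  have := List.sizeOf_lt_of_mem a.2
  simp only [Term.func.sizeOf_spec]
  omega

/-- The function symbol `f` occurs in the term `t`. -/
def OccursFun (f : ℕ) (t : Term) : Prop := ∃ args, IsSubterm (func f args) t

end Term

/-! ### Substitutions -/

/-- Substitutions (maps from variables to terms). -/
abbrev Subst := ℕ → Term

namespace Subst

/-- The domain of a substitution. -/
def dom (σ : Subst) : Set ℕ := {x | σ x ≠ .var x}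

/-- The image of a substitution. -/
def img (σ : Subst) : Set Term := {t | ∃ x ∈ dom σ, σ x = t}

/-- Idempotency of a substitution. -/
def Idem (σ : Subst) : Prop := ∀ x, (σ x).subst σ = σ x

/-- A substitution is ground if its image consists of ground terms. -/
def IsGround (σ : Subst) : Prop := ∀ x ∈ dom σ, (σ x).Ground

open Classical in
/-- Union of two substitutions (intended for disjoint domains). -/
noncomputable def union (σ τ : Subst) : Subst := fun x =>
  if σ x = Term.var x then τ x else σ x

end Subst

/-- Subterms of a set of terms. -/
def subT (T : Set Term) : Set Term := {s | ∃ t ∈ T, Term.IsSubterm s t}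

/-- Variables of a set of terms. -/
def varsT (T : Set Term) : Set ℕ := {x | ∃ t ∈ T, Term.IsSubterm (.var x) t}

/-- DAG size of a set of terms: number of its subterms. -/
noncomputable def sizeT (T : Set Term) : ℕ := (subT T).ncard

/-- Size of a substitution: DAG size of its image. -/
noncomputable def sizeSubst (σ : Subst) : ℕ := sizeT σ.img

/-! ### Deduction systems, steps and derivations -/

/-- A deduction system: a finite set of (standard) deduction rules, each rule
being a pair (left-hand sides, right-hand side) whose right-hand-side variables
occur in the left-hand sides.  Nonce-creation rules and reception rules are
built into the notions of steps/derivations below. -/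
structure DeductionSystem where
  rules : Set (List Term × Term)
  finite : rules.Finite
  wf : ∀ p ∈ rules, p.2.varsSet ⊆ varsT {u | u ∈ p.1}

/-- A step of a derivation: a reception `? → t` or a standard deduction `l → r`
(nonce creations are standard deductions with empty left-hand side). -/
inductive Step
  | recv : Term → Step
  | std : List Term → Term → Step

namespace Step

/-- Right-hand side of a step. -/
def rhs : Step → Term
  | recv t => t
  | std _ r => r

/-- All terms occurring in the step. -/
def terms : Step → Set Term
  | recv t => {t}
  | std l r => {r} ∪ {u | u ∈ l}

end Step

/-- The set of right-hand sides of the first `k` steps of `D`. -/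
def RHSset (D : List Step) (k : ℕ) : Set Term :=
  {r | ∃ j < k, ∃ s, D[j]? = some s ∧ s.rhs = r}

/-- A step is a deduction of the system `DS`: a reception of a ground term, a
nonce creation, or a ground instance of a (standard) rule of `DS`. -/
def IsDeduction (DS : DeductionSystem) (s : Step) : Prop :=
  match s with
  | .recv t => t.Ground
  | .std l r =>
      (∀ u ∈ l, u.Ground) ∧ r.Ground ∧
        ((l = [] ∧ ∃ n, r = Term.nonce n) ∨
          ∃ p ∈ DS.rules, ∃ σ : Subst,
            l = p.1.map (Term.subst σ) ∧ r = p.2.subst σ)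

/-- A derivation: a sequence of deductions in which the left-hand side of every
standard step has already been deduced. -/
def IsDerivation (DS : DeductionSystem) (D : List Step) : Prop :=
  (∀ s ∈ D, IsDeduction DS s) ∧
  ∀ (i : ℕ) (l : List Term) (r : Term), D[i]? = some (Step.std l r) → ∀ u ∈ l, u ∈ RHSset D i

/-- The position of the first reception of `D` at index `≥ k` (or `|D|` if
there is none): (0-indexed version of) `Next(D, ·)`. -/
noncomputable def nextRecv (D : List Step) (k : ℕ) : ℕ :=
  sInf ({D.length} ∪ {j | k ≤ j ∧ ∃ t, D[j]? = some (Step.recv t)})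

/-- `Der DS K`: the set of ground terms derivable from the knowledge `K`. -/
def Der (DS : DeductionSystem) (K : Set Term) : Set Term :=
  {t | ∃ D : List Step, IsDerivation DS D ∧
        (∀ (j : ℕ) (u : Term), D[j]? = some (Step.recv u) → u ∈ K) ∧
        ∃ l, D.getLast? = some (Step.std l t)}

/-- No term is deduced twice in `D` by a standard rule. -/
def NoDuplicateStd (D : List Step) : Prop :=
  ∀ (i j : ℕ) (li lj : List Term) (r : Term), D[i]? = some (Step.std li r) → D[j]? = some (Step.std lj r) → i = j

/-- `(T,σ)`-maximality of a derivation. -/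
def MaximalDeriv (DS : DeductionSystem) (T : Set Term) (σ : Subst) (D : List Step) : Prop :=
  ∀ t ∈ subT T, ∀ k ≤ D.length,
    t.subst σ ∈ Der DS (RHSset D k) → t.subst σ ∈ RHSset D (nextRecv D k)

/-! ### Constraint systems -/

/-- A constraint: a reception `?t`, an emission `!t` or a negative
constraint `♮t`. -/
inductive Constraint
  | recv : Term → Constraint
  | send : Term → Constraint
  | neg : Term → Constraint

namespace Constraint

/-- The term of a constraint. -/
def term : Constraint → Term
  | recv t => t
  | send t => t
  | neg t => t

/-- The constraint is a send constraint. -/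
def isSend : Constraint → Bool
  | send _ => true
  | _ => false

/-- Apply a substitution to a constraint. -/
noncomputable def map (θ : Subst) : Constraint → Constraint
  | recv t => recv (t.subst θ)
  | send t => send (t.subst θ)
  | neg t => neg (t.subst θ)

end Constraint

/-- A (pre-)constraint system is a finite sequence of constraints. -/
abbrev CSystem := List Constraint

/-- The terms of a constraint system. -/
def csTerms (S : CSystem) : Set Term := {t | ∃ c ∈ S, c.term = t}

/-- `Sub(S)`. -/
def csSub (S : CSystem) : Set Term := subT (csTerms S)

/-- `vars(S)`. -/
def csVars (S : CSystem) : Set ℕ := varsT (csTerms S)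

/-- `|Sub(S)|`. -/
noncomputable def csSize (S : CSystem) : ℕ := sizeT (csTerms S)

/-- Apply a substitution to all constraints of a system. -/
noncomputable def csSubst (S : CSystem) (θ : Subst) : CSystem := S.map (Constraint.map θ)

/-- Origination and determination: `S` is a genuine constraint system. -/
def IsCS (S : CSystem) : Prop :=
  (∀ (i : ℕ) (t : Term), S[i]? = some (Constraint.send t) →
      t.varsSet ⊆ {x | ∃ j < i, ∃ u : Term, S[j]? = some (Constraint.recv u) ∧ x ∈ u.varsSet}) ∧
  (∀ (i : ℕ) (t : Term), S[i]? = some (Constraint.neg t) →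
      t.varsSet ⊆ {x | ∃ (j : ℕ) (u : Term), S[j]? = some (Constraint.recv u) ∧ x ∈ u.varsSet})

/-- The knowledge produced by the send constraints up to (and including) index
`i`, instantiated by `σ` (this is `{tⱼσ : j ≤ prev(i), S[j] = !tⱼ}`). -/
def knowledge (S : CSystem) (σ : Subst) (i : ℕ) : Set Term :=
  {u | ∃ j ≤ i, ∃ t, S[j]? = some (Constraint.send t) ∧ u = t.subst σ}

/-- A solution of a constraint system. -/
structure IsSolution (DS : DeductionSystem) (S : CSystem) (σ : Subst) : Prop where
  ground : σ.IsGround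
  idem : σ.Idem
  dom_eq : σ.dom = csVars S
  recv_mem : ∀ (i : ℕ) (t : Term), S[i]? = some (Constraint.recv t) → t.subst σ ∈ Der DS (knowledge S σ i)
  neg_not_mem : ∀ (i : ℕ) (t : Term), S[i]? = some (Constraint.neg t) → t.subst σ ∉ Der DS (knowledge S σ i)

/-- `prev(i)`: the last send index `≤ i` of `S`, if any. -/
def prevSend (S : CSystem) (i : ℕ) : Option ℕ :=
  ((List.range (i + 1)).filter (fun j => ((S[j]?).map Constraint.isSend).getD false)).max?

/-- `(S,σ)`-compliance of a derivation `D` with the mapping `α`: `α` is a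
strictly increasing bijection from the send indices of `S` onto the reception
positions of `D`, sending `!t` to the reception `? → tσ`. -/
structure Compliant (S : CSystem) (σ : Subst) (D : List Step) (α : ℕ → ℕ) : Prop where
  mono : ∀ (i j : ℕ) (ti tj : Term), S[i]? = some (Constraint.send ti) →
    S[j]? = some (Constraint.send tj) → i < j → α i < α j
  maps : ∀ (i : ℕ) (t : Term), S[i]? = some (Constraint.send t) →
    D[α i]? = some (Step.recv (t.subst σ))
  surj : ∀ (j : ℕ) (u : Term), D[j]? = some (Step.recv u) →
    ∃ i t, S[i]? = some (Constraint.send t) ∧ α i = j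

/-- Position in `D` of the first reception strictly after the reception
corresponding (via `α`) to the last send constraint `≤ i` of `S` (or the first
reception of `D` if there is no such send): this is `Next(D, α(prev(i)))`. -/
noncomputable def cutoff (S : CSystem) (D : List Step) (α : ℕ → ℕ) (i : ℕ) : ℕ :=
  match prevSend S i with
  | none => nextRecv D 0
  | some p => nextRecv D (α p + 1)

/-- `D, σ, α ⊢ S`: the derivation `D` is a proof of `σ ⊨ S`. -/
structure IsProof (DS : DeductionSystem) (S : CSystem) (σ : Subst)
    (D : List Step) (α : ℕ → ℕ) : Prop where
  deriv : IsDerivation DS D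
  compliant : Compliant S σ D α
  recv_proved : ∀ (i : ℕ) (t : Term), S[i]? = some (Constraint.recv t) →
    ∃ j < cutoff S D α i, ∃ s, D[j]? = some s ∧ s.rhs = t.subst σ
  neg_not_mem : ∀ (i : ℕ) (t : Term), S[i]? = some (Constraint.neg t) →
    t.subst σ ∉ Der DS (knowledge S σ i)

/-! ### Subterm deduction systems -/

/-- A composition rule: `x₁,…,xₙ → f(x₁,…,xₙ)` with pairwise distinct
variables `xᵢ`. -/
def IsCompRule (p : List Term × Term) : Prop :=
  ∃ (f : ℕ) (xs : List ℕ), xs.Nodup ∧ p.1 = xs.map Term.var ∧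
    p.2 = Term.func f (xs.map Term.var)

/-- A decomposition rule: the right-hand side is a subterm of a left-hand
side. -/
def IsDecompRule (p : List Term × Term) : Prop :=
  ∃ l ∈ p.1, p.2 ∈ l.sub

/-- A subterm deduction system: every standard rule is a composition or a
decomposition rule. -/
def SubtermSystem (DS : DeductionSystem) : Prop :=
  ∀ p ∈ DS.rules, IsCompRule p ∨ IsDecompRule p

/-- A step is a composition: a reception, a nonce creation, or an instance of
a composition rule of `DS`. -/
def IsCompositionStep (DS : DeductionSystem) (s : Step) : Prop :=
  match s with
  | .recv _ => True
  | .std l r =>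
      (l = [] ∧ ∃ n, r = Term.nonce n) ∨
        ∃ p ∈ DS.rules, IsCompRule p ∧
          ∃ σ : Subst, l = p.1.map (Term.subst σ) ∧ r = p.2.subst σ

/-- `l → r` is an instance (not necessarily ground) of a standard deduction
rule of the system. -/
def StdRuleInstance (DS : DeductionSystem) (l : List Term) (r : Term) : Prop :=
  (l = [] ∧ ∃ n, r = Term.nonce n) ∨
    ∃ p ∈ DS.rules, ∃ σ : Subst, l = p.1.map (Term.subst σ) ∧ r = p.2.subst σ

/-- DAG size of a rule. -/
noncomputable def ruleSize (p : List Term × Term) : ℕ :=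
  sizeT ({p.2} ∪ {u | u ∈ p.1})

/-- Maximal size of a decomposition rule of the system. -/
noncomputable def maxDecompSize (DS : DeductionSystem) : ℕ :=
  sSup {n | ∃ p ∈ DS.rules, IsDecompRule p ∧ ruleSize p = n}

/-! ### Localization -/

/-- `T` localizes the derivation `D` for `σ`. -/
def Localizes (DS : DeductionSystem) (T : Set Term) (σ : Subst) (D : List Step) : Prop :=
  ∀ (i : ℕ) (l : List Term) (r : Term), D[i]? = some (Step.std l r) →
    ∀ t ∈ subT T, ¬ t.IsVar → t.subst σ = r →
      ∃ ts : List Term, (∀ u ∈ ts, u ∈ subT T) ∧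
        (∀ u ∈ ts, u.subst σ ∈ RHSset D i) ∧ StdRuleInstance DS ts t

/-- `T` one-to-one localizes `D` for `σ`. -/
def OneToOneLocalizes (DS : DeductionSystem) (T : Set Term) (σ : Subst)
    (D : List Step) : Prop :=
  Localizes DS T σ D ∧ Set.InjOn (Term.subst σ) (subT T)

/-! ### Terms of a derivation, `Out(S)` -/

/-- The terms occurring in a derivation. -/
def derTerms (D : List Step) : Set Term := {t | ∃ s ∈ D, t ∈ s.terms}

/-- `Sub(D)`. -/
def subD (D : List Step) : Set Term := subT (derTerms D)

/-- The terms of the send constraints of `S`. -/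
def outTerms (S : CSystem) : Set Term := {t | Constraint.send t ∈ S}

/-! ### Milestone sequences -/

/-- An element of a milestone sequence: `→ t` or `? → t`. -/
inductive MStep
  | ded : Term → MStep
  | recvm : Term → MStep

/-- The term of a milestone element. -/
def MStep.term : MStep → Term
  | ded t => t
  | recvm t => t

/-- `M` is a milestone candidate sequence of `D` for `(T,σ)`. -/
def IsMilestoneOf (T : Set Term) (σ : Subst) (D : List Step) (M : List MStep) : Prop :=
  (∀ m ∈ M, m.term ∈ subT T) ∧
  ∃ α : ℕ → ℕ, (∀ i j, i < j → j < M.length → α i < α j) ∧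
    ∀ (i : ℕ) (m : MStep), M[i]? = some m →
      match m with
      | MStep.recvm t => D[α i]? = some (Step.recv (t.subst σ))
      | MStep.ded t => ∃ l, D[α i]? = some (Step.std l (t.subst σ))

/-- `M` is the `(T,σ)`-milestone sequence of `D`: a candidate of maximal
length. -/
def IsMilestoneSeq (T : Set Term) (σ : Subst) (D : List Step) (M : List MStep) : Prop :=
  IsMilestoneOf T σ D M ∧ ∀ M', IsMilestoneOf T σ D M' → M'.length ≤ M.length

/-! ### Free pairing symbol -/

/-- `f` occurs in the rule `p`. -/
def OccursInRule (f : ℕ) (p : List Term × Term) : Prop :=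
  (∃ t ∈ p.1, t.OccursFun f) ∨ p.2.OccursFun f

/-- The system contains a composition rule `x₁, x₂ → f(x₁,x₂)` where the
binary symbol `f` occurs in no other rule. -/
def FreePairing (DS : DeductionSystem) : Prop :=
  ∃ (f x₁ x₂ : ℕ), x₁ ≠ x₂ ∧
    ([Term.var x₁, Term.var x₂], Term.func f [Term.var x₁, Term.var x₂]) ∈ DS.rules ∧
    ∀ p ∈ DS.rules, OccursInRule f p →
      p = ([Term.var x₁, Term.var x₂], Term.func f [Term.var x₁, Term.var x₂])

/-! ### Unification -/

/-- `σ` is a unifier of the unification system `U`. -/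
def IsUnifier (U : Set (Term × Term)) (σ : Subst) : Prop :=
  ∀ pq ∈ U, Term.subst σ pq.1 = Term.subst σ pq.2

/-- `θ` is a most general unifier of `U`. -/
def IsMGU (U : Set (Term × Term)) (θ : Subst) : Prop :=
  IsUnifier U θ ∧ ∀ σ, IsUnifier U σ → ∃ τ : Subst, ∀ x, σ x = (θ x).subst τ

/-- The terms of a unification system. -/
def unifTerms (U : Set (Term × Term)) : Set Term :=
  {t | ∃ pq ∈ U, t = pq.1 ∨ t = pq.2}

/-- The variables of a unification system. -/
def unifVars (U : Set (Term × Term)) : Set ℕ := varsT (unifTerms U)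

namespace Lemma3Aux

theorem subst_var (σ : Subst) (x : ℕ) : Term.subst σ (.var x) = σ x := by rw [Term.subst]
theorem subst_cst (σ : Subst) (c : ℕ) : Term.subst σ (.cst c) = .cst c := by rw [Term.subst]
theorem subst_nonce (σ : Subst) (n : ℕ) : Term.subst σ (.nonce n) = .nonce n := by rw [Term.subst]
theorem subst_func (σ : Subst) (f : ℕ) (args : List Term) :
    Term.subst σ (.func f args) = .func f (args.map (Term.subst σ)) := by
  rw [Term.subst]
  congr 1
  simp

theorem subterm_trans {a b c : Term} (h1 : a.IsSubterm b) (h2 : b.IsSubterm c) :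
    a.IsSubterm c := by
  induction h2 with
  | refl => exact h1
  | func hmem _ ih => exact .func hmem ih

theorem subterm_subst {s t : Term} (σ : Subst) (h : s.IsSubterm t) :
    (s.subst σ).IsSubterm (t.subst σ) := by
  induction h with
  | refl => exact .refl _
  | func hmem _ ih =>
      rw [subst_func]
      exact .func (List.mem_map.mpr ⟨_, hmem, rfl⟩) ih

theorem subterm_func_inv {s : Term} {f : ℕ} {args : List Term}
    (h : s.IsSubterm (.func f args)) : s = .func f args ∨ ∃ a ∈ args, s.IsSubterm a := by
  cases h with
  | refl => exact Or.inl rfl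
  | func hmem hsub => exact Or.inr ⟨_, hmem, hsub⟩

theorem subterm_nonce_inv {s : Term} {n : ℕ} (h : s.IsSubterm (.nonce n)) : s = .nonce n := by
  cases h; rfl

theorem subterm_subst_decompose' {s w : Term} {σ : Subst} (h : s.IsSubterm w) :
    ∀ t : Term, w = t.subst σ →
      (∃ t' : Term, t'.IsSubterm t ∧ ¬ t'.IsVar ∧ s = t'.subst σ) ∨
      (∃ x, Term.IsSubterm (.var x) t ∧ s.IsSubterm (σ x)) := by
  induction h with
  | refl =>
      intro t ht
      cases t with
      | var x =>
          refine Or.inr ⟨x, .refl _, ?_⟩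
          rw [ht, subst_var]
          exact .refl _
      | cst c => exact Or.inl ⟨_, .refl _, fun h => h, ht⟩
      | nonce n => exact Or.inl ⟨_, .refl _, fun h => h, ht⟩
      | func g bs => exact Or.inl ⟨_, .refl _, fun h => h, ht⟩
  | @func u f args hmem hsu ih =>
      intro t ht
      cases t with
      | var x =>
          refine Or.inr ⟨x, .refl _, ?_⟩
          rw [subst_var] at ht
          exact ht ▸ Term.IsSubterm.func hmem hsu
      | cst c => rw [subst_cst] at ht; exact absurd ht (by simp)
      | nonce n => rw [subst_nonce] at ht; exact absurd ht (by simp)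
      | func g bs =>
          rw [subst_func] at ht
          obtain ⟨hf, hargs⟩ := Term.func.inj ht
          subst hargs
          obtain ⟨b, hb, rfl⟩ := List.mem_map.mp hmem
          rcases ih b rfl with ⟨t', ht', hnv, hse⟩ | ⟨x, hx, hsx⟩
          · exact Or.inl ⟨t', .func hb ht', hnv, hse⟩
          · exact Or.inr ⟨x, .func hb hx, hsx⟩

theorem rhs_mem_terms (st : Step) : st.rhs ∈ st.terms := by
  cases st <;> simp [Step.rhs, Step.terms]

end Lemma3Aux

open Lemma3Aux

/-- Lemma 3: in a subterm deduction system, every subterm of a proof of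
`σ ⊨ S` that is not the instance of a non-variable subterm of `Out(S)` is
deduced by a composition rule and does not appear earlier. -/
theorem subterm_created_by_composition (DS : DeductionSystem) (hsub : SubtermSystem DS)
    (S : CSystem) (hS : IsCS S) (σ : Subst) (hsol : IsSolution DS S σ)
    (D : List Step) (α : ℕ → ℕ) (hproof : IsProof DS S σ D α)
    (hnd : NoDuplicateStd D)
    (s : Term) (hs : s ∈ subD D)
    (hout : s ∉ (Term.subst σ) '' (subT (outTerms S) \ {t : Term | t.IsVar})) :
    ∃ (i : ℕ) (st : Step), D[i]? = some st ∧ st.rhs = s ∧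
      IsCompositionStep DS st ∧ s ∉ subT (RHSset D i) := by
  classical
  -- P i : s occurs as a subterm of a term of step i
  have hex : ∃ i : ℕ, ∃ st : Step, D[i]? = some st ∧ ∃ u ∈ st.terms, s.IsSubterm u := by
    obtain ⟨t, ⟨st, hst, htst⟩, hsub'⟩ := hs
    obtain ⟨i, hi⟩ := List.mem_iff_getElem?.mp hst
    exact ⟨i, st, hi, t, htst, hsub'⟩
  set i := Nat.find hex with hidef
  obtain ⟨st, hDi, u0, hu0, hsu0⟩ := Nat.find_spec hex
  have hmin : ∀ j < i, ∀ st' : Step, D[j]? = some st' → ∀ u ∈ st'.terms, ¬ s.IsSubterm u := by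
    intro j hj st' hD' u hu hsu
    exact Nat.find_min hex hj ⟨st', hD', u, hu, hsu⟩
  -- s is not a subterm of anything already deduced strictly before i
  have hnotbefore : s ∉ subT (RHSset D i) := by
    rintro ⟨u, ⟨j, hj, st', hD', hr⟩, hsu⟩
    exact hmin j hj st' hD' u (hr ▸ rhs_mem_terms st') hsu
  cases st with
  | recv u =>
      -- u is the instance of a send constraint
      exfalso
      obtain ⟨k, t, hSk, hαk⟩ := hproof.compliant.surj i u hDi
      have hDαk := hproof.compliant.maps k t hSk
      rw [hαk, hDi] at hDαk
      have hutσ : u = t.subst σ := by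
        injection hDαk with h; injection h
      have hu0u : u0 = u := by
        simp [Step.terms] at hu0; exact hu0
      have hstσ : s.IsSubterm (t.subst σ) := hutσ ▸ hu0u ▸ hsu0
      rcases subterm_subst_decompose' hstσ t rfl with ⟨t', ht', hnv, hse⟩ | ⟨x, hx, hsx⟩
      · -- s is the instance of a non-variable subterm of Out(S)
        exact hout ⟨t', ⟨⟨t, List.mem_iff_getElem?.mpr ⟨k, hSk⟩, ht'⟩, hnv⟩, hse.symm⟩
      · -- s is a subterm of σ x for a variable x of t: x occurs in an earlier receive
        obtain ⟨j, hjk, v, hSj, hxv⟩ := hS.1 k t hSk hx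
        obtain ⟨m, hm, st', hDm, hrhs⟩ := hproof.recv_proved j v hSj
        -- cutoff S D α j ≤ i
        have hcut : cutoff S D α j ≤ i := by
          unfold cutoff
          have hirecv : ∀ k' : ℕ, k' ≤ i → nextRecv D k' ≤ i := by
            intro k' hk'
            exact Nat.sInf_le (Or.inr ⟨hk', t.subst σ, hutσ ▸ hDi⟩)
          cases hps : prevSend S j with
          | none => exact hirecv 0 (Nat.zero_le _)
          | some p =>
              have hpmem := List.max?_mem hps
              have hpfil := List.mem_filter.mp hpmem
              have hpj : p ≤ j := Nat.lt_succ_iff.mp (List.mem_range.mp hpfil.1)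
              have : ∃ tp : Term, S[p]? = some (Constraint.send tp) := by
                rcases hSp : S[p]? with _ | c
                · rw [hSp] at hpfil; simp at hpfil
                · cases c with
                  | send tp => exact ⟨tp, rfl⟩
                  | recv tp => rw [hSp] at hpfil; simp [Constraint.isSend] at hpfil
                  | neg tp => rw [hSp] at hpfil; simp [Constraint.isSend] at hpfil
              obtain ⟨tp, hSp⟩ := this
              have hpk : p < k := lt_of_le_of_lt hpj hjk
              have := hproof.compliant.mono p k tp t hSp hSk hpk
              rw [hαk] at this
              exact hirecv (α p + 1) this
        -- the step m < i deduces vσ, which has s as a subterm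
        exfalso
        apply hmin m (lt_of_lt_of_le hm hcut) st' hDm (v.subst σ) (hrhs ▸ rhs_mem_terms st')
        have : (σ x).IsSubterm (v.subst σ) := by
          have := subterm_subst σ hxv
          rwa [subst_var] at this
        exact subterm_trans hsx this
  | std l r =>
      -- all lhs terms were deduced earlier; so s is a subterm of r
      have hlhs : ∀ u ∈ l, ¬ s.IsSubterm u := by
        intro u hu hsu
        apply hnotbefore
        exact ⟨u, hproof.deriv.2 i l r hDi u hu, hsu⟩
      have hsr : s.IsSubterm r := by
        rcases hu0 with hu0 | hu0
        · exact hu0 ▸ hsu0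
        · exact absurd hsu0 (hlhs u0 hu0)
      have hded : IsDeduction DS (Step.std l r) :=
        hproof.deriv.1 _ (List.mem_iff_getElem?.mpr ⟨i, hDi⟩)
      obtain ⟨-, -, hcase⟩ := hded
      rcases hcase with ⟨hl, n, hr⟩ | ⟨p, hp, σ', hl, hr⟩
      · -- nonce creation
        have : s = r := hr ▸ subterm_nonce_inv (hr ▸ hsr)
        exact ⟨i, Step.std l r, hDi, this.symm, Or.inl ⟨hl, n, hr⟩, hnotbefore⟩
      · rcases hsub p hp with hcomp | hdec
        · -- composition rule
          obtain ⟨f, xs, hnd', h1, h2⟩ := hcomp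
          have hrfunc : r = Term.func f (l : List Term) := by
            rw [hr, h2, subst_func, hl, h1]
          rcases subterm_func_inv (hrfunc ▸ hsr) with hseq | ⟨a, ha, hsa⟩
          · refine ⟨i, Step.std l r, hDi, ?_, ?_, hnotbefore⟩
            · rw [Step.rhs, hrfunc, hseq]
            · exact Or.inr ⟨p, hp, ⟨f, xs, hnd', h1, h2⟩, σ', hl, hr⟩
          · exact absurd hsa (hlhs a ha)
        · -- decomposition rule: r is a subterm of a lhs term
          obtain ⟨l0, hl0, hrl0⟩ := hdec
          have : s.IsSubterm (l0.subst σ') :=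
            subterm_trans hsr (hr ▸ subterm_subst σ' hrl0)
          exact absurd this (hlhs _ (hl ▸ List.mem_map.mpr ⟨l0, hl0, rfl⟩))
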